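/- Let m ≥ 2 be an integer. Let P(n) denote the largest prime divisor of n (with P(1) = 1), and let P_m(n) denote the largest prime p dividing n whose exponent in the prime factorization of n is not divisible by m (with P_m(n) = 1 if n is a perfect m-th power). Then there exist positive constants c and C such that for all x ≥ 3, the number of positive integers n ≤ x with P_m(n) ≠ P(n) is at most C · x · exp(−c · (log x · log log x)^{1/2}). -/

import Mathlib

open Finset ArithmeticFunction Real

/-- `Pbig n` is the largest prime factor of `n`, with `Pbig 1 = 1`. -/
def Pbig (n : ℕ) : ℕ :=
  WithBot.unbotD 1 n.primeFactors.max

/-- `Pm m n` is the largest prime factor of `n` whose multiplicity in `n` is not divisible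
by `m`, with `Pm m n = 1` if `n` is a perfect `m`-th power. -/
def Pm (m n : ℕ) : ℕ :=
  WithBot.unbotD 1 ((n.primeFactors.filter (fun p => ¬ m ∣ n.factorization p)).max)

lemma exists_sq_dvd {m n : ℕ} (hm : 2 ≤ m) (hn : 2 ≤ n) (h : Pm m n ≠ Pbig n) :
    ∃ p : ℕ, p.Prime ∧ p ^ 2 ∣ n ∧ ∀ q ∈ n.primeFactors, q ≤ p := by
  have hne : n.primeFactors.Nonempty := Nat.nonempty_primeFactors.mpr (by omega)
  set p := n.primeFactors.max' hne with hpdef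
  have hmax : n.primeFactors.max = (p : WithBot ℕ) := (Finset.coe_max' hne).symm
  have hPbig : Pbig n = p := by rw [Pbig, hmax]; rfl
  have hpmem : p ∈ n.primeFactors := n.primeFactors.max'_mem hne
  have hpp : p.Prime := Nat.prime_of_mem_primeFactors hpmem
  have hn0 : n ≠ 0 := by omega
  have hdvd : m ∣ n.factorization p := by
    by_contra hmd
    have hmem2 : p ∈ n.primeFactors.filter (fun q => ¬ m ∣ n.factorization q) :=
      mem_filter.mpr ⟨hpmem, hmd⟩
    have h1 : (p : WithBot ℕ) ≤ (n.primeFactors.filter (fun q => ¬ m ∣ n.factorization q)).max :=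
      Finset.le_max hmem2
    have h2 : (n.primeFactors.filter (fun q => ¬ m ∣ n.factorization q)).max ≤ (p : WithBot ℕ) :=
      hmax ▸ Finset.max_mono (Finset.filter_subset _ _)
    have h3 : (n.primeFactors.filter (fun q => ¬ m ∣ n.factorization q)).max = (p : WithBot ℕ) :=
      le_antisymm h2 h1
    exact h (by rw [Pm, h3, hPbig]; rfl)
  have hν : 1 ≤ n.factorization p :=
    hpp.factorization_pos_of_dvd hn0 (Nat.dvd_of_mem_primeFactors hpmem)
  have hmν : m ≤ n.factorization p := Nat.le_of_dvd (by omega) hdvd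
  refine ⟨p, hpp, ?_, fun q hq => Finset.le_max' _ q hq⟩
  rw [Nat.Prime.pow_dvd_iff_le_factorization hpp hn0]
  omega

lemma Pm_one_eq (m : ℕ) : Pm m 1 = Pbig 1 := by
  simp [Pm, Pbig]

lemma sum_inv_sq_le {Y : ℕ} (hY : 1 ≤ Y) {N : ℕ} (hYN : Y ≤ N) :
    ∑ k ∈ Finset.Ioc Y N, (1 : ℝ) / (k : ℝ) ^ 2 ≤ 1 / Y - 1 / N := by
  induction N, hYN using Nat.le_induction with
  | base => simp
  | succ N hYN ih =>
    rw [Finset.sum_Ioc_succ_top (by omega)]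
    have hN1 : (1 : ℝ) ≤ (N : ℝ) := by exact_mod_cast hY.trans hYN
    have hc : ((N + 1 : ℕ) : ℝ) = (N : ℝ) + 1 := by push_cast; ring
    have key : (1 : ℝ) / ((N : ℝ) + 1) ^ 2 ≤ 1 / N - 1 / ((N : ℝ) + 1) := by
      rw [div_sub_div _ _ (by linarith) (by linarith)]
      rw [div_le_div_iff₀ (by positivity) (by positivity)]
      ring_nf
      nlinarith
    rw [hc]
    linarith [ih]

lemma card_T1 {N Y : ℕ} (hY : 1 ≤ Y) (hYN : Y ≤ N) :
    (((Finset.Icc 1 N).filter (fun n => ∃ p ∈ Finset.Ioc Y N, p.Prime ∧ p ^ 2 ∣ n)).card : ℝ)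
      ≤ (N : ℝ) / Y := by
  have hN0 : 0 < N := hY.trans hYN
  have hsub : (Finset.Icc 1 N).filter (fun n => ∃ p ∈ Finset.Ioc Y N, p.Prime ∧ p ^ 2 ∣ n)
      ⊆ (Finset.Ioc Y N).biUnion (fun k => (Finset.Icc 1 N).filter (fun n => k ^ 2 ∣ n)) := by
    intro n hn
    simp only [mem_filter, mem_Icc] at hn
    obtain ⟨⟨h1, h2⟩, p, hpIoc, _, hdvd⟩ := hn
    exact Finset.mem_biUnion.mpr ⟨p, hpIoc, mem_filter.mpr ⟨mem_Icc.mpr ⟨h1, h2⟩, hdvd⟩⟩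
  have hcard : ∀ k : ℕ, ((Finset.Icc 1 N).filter (fun n => k ^ 2 ∣ n)).card = N / k ^ 2 := by
    intro k
    have : Finset.Icc 1 N = Finset.Ioc 0 N := rfl
    rw [this, Nat.Ioc_filter_dvd_card_eq_div]
  calc ((((Finset.Icc 1 N).filter (fun n => ∃ p ∈ Finset.Ioc Y N, p.Prime ∧ p ^ 2 ∣ n))).card : ℝ)
      ≤ (((Finset.Ioc Y N).biUnion (fun k => (Finset.Icc 1 N).filter (fun n => k ^ 2 ∣ n))).card : ℝ) := by
        exact_mod_cast Finset.card_le_card hsub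
    _ ≤ ∑ k ∈ Finset.Ioc Y N, (((Finset.Icc 1 N).filter (fun n => k ^ 2 ∣ n)).card : ℝ) := by
        exact_mod_cast Finset.card_biUnion_le
    _ ≤ ∑ k ∈ Finset.Ioc Y N, (N : ℝ) * ((1 : ℝ) / (k : ℝ) ^ 2) := by
        refine Finset.sum_le_sum fun k hk => ?_
        rw [hcard k]
        have hk0 : 0 < k := lt_of_le_of_lt (Nat.zero_le Y) (Finset.mem_Ioc.mp hk).1
        have := Nat.cast_div_le (m := N) (n := k ^ 2) (α := ℝ)
        refine this.trans (le_of_eq ?_)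
        push_cast
        ring
    _ = (N : ℝ) * ∑ k ∈ Finset.Ioc Y N, (1 : ℝ) / (k : ℝ) ^ 2 := by rw [Finset.mul_sum]
    _ ≤ (N : ℝ) * (1 / Y - 1 / N) := by
        refine mul_le_mul_of_nonneg_left (sum_inv_sq_le hY hYN) (by positivity)
    _ ≤ (N : ℝ) / Y := by
        have hN : (0 : ℝ) < N := by exact_mod_cast hN0
        have hY' : (0 : ℝ) < Y := by exact_mod_cast hY
        rw [mul_sub]
        rw [mul_one_div, mul_one_div, div_self (ne_of_gt hN)]
        linarith [div_nonneg (le_of_lt hN) (le_of_lt hY')]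



noncomputable def rpowHom (sg : ℝ) : ℕ →* ℝ where
  toFun n := (n : ℝ) ^ (-sg)
  map_one' := by simp
  map_mul' a b := by
    push_cast
    exact Real.mul_rpow (Nat.cast_nonneg a) (Nat.cast_nonneg b)

lemma rankin (N Y : ℕ) {sg : ℝ} (hsg : 0 < sg) :
    (((Finset.Icc 1 N).filter (fun n => ∀ p ∈ n.primeFactors, p ≤ Y)).card : ℝ)
      ≤ (N : ℝ) ^ sg * ∏ p ∈ (Y + 1).primesBelow, (1 - (p : ℝ) ^ (-sg))⁻¹ := by
  have hlt : ∀ {p : ℕ}, p.Prime → ‖rpowHom sg p‖ < 1 := by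
    intro p hp
    have : rpowHom sg p = (p : ℝ) ^ (-sg) := rfl
    rw [this, Real.norm_eq_abs, abs_of_nonneg (Real.rpow_nonneg (Nat.cast_nonneg p) _)]
    exact Real.rpow_lt_one_of_one_lt_of_neg (by exact_mod_cast hp.one_lt) (neg_lt_zero.mpr hsg)
  obtain ⟨hsum, hhs⟩ :=
    EulerProduct.summable_and_hasSum_smoothNumbers_prod_primesBelow_geometric hlt (Y + 1)
  set S := (Finset.Icc 1 N).filter (fun n => ∀ p ∈ n.primeFactors, p ≤ Y) with hS
  have hmem : ∀ n ∈ S, n ∈ (Y + 1).smoothNumbers := by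
    intro n hn
    simp only [hS, mem_filter, mem_Icc] at hn
    refine Nat.mem_smoothNumbers'.mpr fun p hp hpn => ?_
    have : p ∈ n.primeFactors := Nat.mem_primeFactors.mpr ⟨hp, hpn, by omega⟩
    exact Nat.lt_succ_of_le (hn.2 p this)
  have key : ∑ n ∈ S, ((n : ℝ)) ^ (-sg) ≤ ∏ p ∈ (Y + 1).primesBelow, (1 - (p : ℝ) ^ (-sg))⁻¹ := by
    have hinj : Function.Injective
        (fun n : {x // x ∈ S} => (⟨n.1, hmem n.1 n.2⟩ : (Y + 1).smoothNumbers)) := by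
      intro a b hab
      apply Subtype.ext
      simpa using hab
    have h2 := sum_le_hasSum (S.attach.map ⟨_, hinj⟩)
      (fun i _ => Real.rpow_nonneg (Nat.cast_nonneg _) _) hhs
    rw [Finset.sum_map] at h2
    rw [← Finset.sum_attach S (fun n => ((n : ℝ)) ^ (-sg))]
    exact h2
  calc (S.card : ℝ) = ∑ _n ∈ S, (1 : ℝ) := by simp
    _ ≤ ∑ n ∈ S, (N : ℝ) ^ sg * (n : ℝ) ^ (-sg) := by
        refine Finset.sum_le_sum fun n hn => ?_
        simp only [hS, mem_filter, mem_Icc] at hn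
        have hn0 : (0 : ℝ) < n := by exact_mod_cast hn.1.1
        have h1 : (n : ℝ) ^ sg ≤ (N : ℝ) ^ sg :=
          Real.rpow_le_rpow hn0.le (by exact_mod_cast hn.1.2) hsg.le
        have h2 : (0 : ℝ) < (n : ℝ) ^ sg := Real.rpow_pos_of_pos hn0 sg
        rw [Real.rpow_neg hn0.le]
        calc (1 : ℝ) = (n : ℝ) ^ sg / (n : ℝ) ^ sg := (div_self (ne_of_gt h2)).symm
          _ ≤ (N : ℝ) ^ sg / (n : ℝ) ^ sg := by gcongr
          _ = (N : ℝ) ^ sg * ((n : ℝ) ^ sg)⁻¹ := by rw [div_eq_mul_inv]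
    _ = (N : ℝ) ^ sg * ∑ n ∈ S, (n : ℝ) ^ (-sg) := by rw [Finset.mul_sum]
    _ ≤ _ := by
        refine mul_le_mul_of_nonneg_left key (Real.rpow_nonneg (Nat.cast_nonneg N) sg)

lemma prod_le_exp (Y : ℕ) {sg : ℝ} (h2 : 1 / 2 ≤ sg) :
    ∏ p ∈ (Y + 1).primesBelow, (1 - (p : ℝ) ^ (-sg))⁻¹
      ≤ Real.exp (3.5 * ∑ p ∈ (Y + 1).primesBelow, (p : ℝ) ^ (-sg)) := by
  rw [Finset.mul_sum, Real.exp_sum]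
  have hfac : ∀ p ∈ (Y + 1).primesBelow,
      (1 - (p : ℝ) ^ (-sg))⁻¹ ≤ Real.exp (3.5 * (p : ℝ) ^ (-sg)) ∧
        0 ≤ (1 - (p : ℝ) ^ (-sg))⁻¹ := by
    intro p hp
    have hpp : p.Prime := Nat.prime_of_mem_primesBelow hp
    set t := (p : ℝ) ^ (-sg) with ht
    have ht0 : 0 ≤ t := Real.rpow_nonneg (Nat.cast_nonneg p) _
    have htle : t ≤ 5 / 7 := by
      have h1 : t ≤ (2 : ℝ) ^ (-sg) := by
        rw [ht]
        refine Real.rpow_le_rpow_of_nonpos two_pos (by exact_mod_cast hpp.two_le) (by linarith)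
      have h2' : (2 : ℝ) ^ (-sg) ≤ (2 : ℝ) ^ (-(1 / 2 : ℝ)) :=
        Real.rpow_le_rpow_of_exponent_le one_le_two (by linarith)
      have h3 : (2 : ℝ) ^ (-(1 / 2 : ℝ)) ≤ 5 / 7 := by
        rw [Real.rpow_neg (by norm_num : (0:ℝ) ≤ 2), ← Real.sqrt_eq_rpow]
        have hs : (7 / 5 : ℝ) ≤ Real.sqrt 2 := by
          rw [show (2:ℝ) = ((7/5:ℝ))^2 * (2 / ((7/5)^2)) by ring]
          calc (7/5 : ℝ) = Real.sqrt ((7/5)^2) := (Real.sqrt_sq (by norm_num)).symm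
            _ ≤ _ := Real.sqrt_le_sqrt (by nlinarith)
        calc (Real.sqrt 2)⁻¹ ≤ (7 / 5 : ℝ)⁻¹ := by
              refine inv_anti₀ (by norm_num) hs
          _ = 5 / 7 := by norm_num
      linarith
    have h1t : 0 < 1 - t := by linarith
    constructor
    · have hstep : (1 - t)⁻¹ ≤ 1 + 3.5 * t := by
        rw [inv_eq_one_div, div_le_iff₀ h1t]
        nlinarith
      refine hstep.trans ?_
      linarith [Real.add_one_le_exp (3.5 * t)]
    · positivity
  refine Finset.prod_le_prod (fun p hp => (hfac p hp).2) (fun p hp => (hfac p hp).1)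



noncomputable def FF (p : ℕ) : ℝ := if p.Prime then 1 / (p : ℝ) else 0
noncomputable def GG (p : ℕ) : ℝ := if p.Prime then Real.log p / p else 0

lemma FF_nonneg (p : ℕ) : 0 ≤ FF p := by
  unfold FF; split <;> positivity

lemma GG_nonneg (p : ℕ) : 0 ≤ GG p := by
  unfold GG; split
  · rename_i h
    have h1 : (1:ℝ) ≤ (p:ℝ) := by exact_mod_cast h.one_lt.le
    have h2 := Real.log_nonneg h1
    positivity
  · exact le_refl 0

lemma theta_le (n : ℕ) : ∑ p ∈ (n + 1).primesBelow, Real.log p ≤ n * Real.log 4 := by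
  have h0 : (0 : ℕ) < primorial n := primorial_pos n
  have h1 : ((primorial n : ℕ) : ℝ) ≤ (4 : ℝ) ^ n := by exact_mod_cast primorial_le_4_pow n
  have h2 : Real.log (primorial n) ≤ n * Real.log 4 := by
    calc Real.log (primorial n) ≤ Real.log ((4 : ℝ) ^ n) :=
          Real.log_le_log (by exact_mod_cast h0) h1
    _ = n * Real.log 4 := by rw [Real.log_pow]
  refine le_of_eq_of_le ?_ h2
  have hPB : (n + 1).primesBelow = Finset.filter (fun p => p.Prime) (Finset.range (n + 1)) := rfl
  rw [hPB, primorial, Nat.cast_prod, Real.log_prod]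
  intro p hp
  have h3 := (Finset.mem_filter.mp hp).2.pos
  have : (0:ℝ) < (p:ℝ) := by exact_mod_cast h3
  positivity

lemma mertens1 {n : ℕ} (hn : 1 ≤ n) :
    ∑ p ∈ (n + 1).primesBelow, Real.log p / p ≤ Real.log n + 1.4 := by
  have hlog4 : Real.log 4 ≤ 1.4 := by
    have h2 : Real.log 4 = 2 * Real.log 2 := by
      rw [show (4:ℝ) = 2 ^ 2 by norm_num, Real.log_pow]; push_cast; ring
    have := Real.log_two_lt_d9
    rw [h2]; linarith
  have hfact0 : (Nat.factorial n : ℕ) ≠ 0 := Nat.factorial_ne_zero n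
  have hprod := Nat.factorization_prod_pow_eq_self hfact0
  simp only [Finsupp.prod] at hprod
  rw [Nat.support_factorization] at hprod
  have hlogfact : Real.log (Nat.factorial n) =
      ∑ p ∈ (Nat.factorial n).primeFactors,
        (((Nat.factorial n).factorization p : ℕ) : ℝ) * Real.log p := by
    conv_lhs => rw [← hprod]
    push_cast
    rw [Real.log_prod]
    · refine Finset.sum_congr rfl fun p hp => ?_
      rw [Real.log_pow]
    · intro p hp
      have hpp := Nat.prime_of_mem_primeFactors hp
      have hp0 : (0:ℝ) < (p:ℝ) := by exact_mod_cast hpp.pos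
      positivity
  have hsub : (n + 1).primesBelow ⊆ (Nat.factorial n).primeFactors := by
    intro p hp
    have hpp := Nat.prime_of_mem_primesBelow hp
    have hpn : p ≤ n := Nat.lt_succ_iff.mp (Nat.lt_of_mem_primesBelow hp)
    exact Nat.mem_primeFactors.mpr ⟨hpp, Nat.dvd_factorial hpp.pos hpn, hfact0⟩
  have hterm : ∀ p ∈ (n + 1).primesBelow,
      ((n / p : ℕ) : ℝ) * Real.log p ≤ (((Nat.factorial n).factorization p : ℕ) : ℝ) * Real.log p := by
    intro p hp
    have hpp := Nat.prime_of_mem_primesBelow hp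
    haveI := Fact.mk hpp
    have hpn : p ≤ n := Nat.lt_succ_iff.mp (Nat.lt_of_mem_primesBelow hp)
    have hv : (Nat.factorial n).factorization p
        = ∑ i ∈ Finset.Ico 1 (Nat.log p n + 1), n / p ^ i := by
      rw [Nat.factorization_def _ hpp]
      exact padicValNat_factorial (Nat.lt_succ_self _)
    have h1mem : 1 ∈ Finset.Ico 1 (Nat.log p n + 1) := by
      have := Nat.log_pos hpp.one_lt hpn
      simp only [Finset.mem_Ico]
      omega
    have hge : n / p ≤ (Nat.factorial n).factorization p := by
      rw [hv]
      calc n / p = n / p ^ 1 := by rw [pow_one]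
      _ ≤ _ := Finset.single_le_sum (f := fun i => n / p ^ i) (fun i _ => Nat.zero_le _) h1mem
    exact mul_le_mul_of_nonneg_right (by exact_mod_cast hge)
      (Real.log_nonneg (by exact_mod_cast hpp.one_lt.le))
  have hA : ∑ p ∈ (n + 1).primesBelow, ((n / p : ℕ) : ℝ) * Real.log p
      ≤ Real.log (Nat.factorial n) := by
    rw [hlogfact]
    refine le_trans (Finset.sum_le_sum hterm) (Finset.sum_le_sum_of_subset_of_nonneg hsub ?_)
    intro p hp _
    have hpp := Nat.prime_of_mem_primeFactors hp
    have h1 : (0:ℝ) ≤ Real.log p := Real.log_nonneg (by exact_mod_cast hpp.one_lt.le)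
    positivity
  have hfactle : Real.log (Nat.factorial n) ≤ n * Real.log n := by
    have h1 : ((Nat.factorial n : ℕ) : ℝ) ≤ (n : ℝ) ^ n := by
      exact_mod_cast Nat.factorial_le_pow n
    calc Real.log (Nat.factorial n) ≤ Real.log ((n : ℝ) ^ n) :=
          Real.log_le_log (by exact_mod_cast Nat.factorial_pos n) h1
    _ = n * Real.log n := by rw [Real.log_pow]
  have hfloor : ∀ p ∈ (n + 1).primesBelow,
      ((n : ℝ) / p - 1) * Real.log p ≤ ((n / p : ℕ) : ℝ) * Real.log p := by
    intro p hp
    have hpp := Nat.prime_of_mem_primesBelow hp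
    have hp0 : (0 : ℝ) < p := by exact_mod_cast hpp.pos
    have hmod : (n : ℝ) = p * ((n / p : ℕ) : ℝ) + ((n % p : ℕ) : ℝ) := by
      exact_mod_cast (Nat.div_add_mod n p).symm
    have hlt : ((n % p : ℕ) : ℝ) < (p : ℝ) := by exact_mod_cast Nat.mod_lt _ hpp.pos
    have hkey : (n : ℝ) / p - 1 ≤ ((n / p : ℕ) : ℝ) := by
      rw [sub_le_iff_le_add, div_le_iff₀ hp0]
      nlinarith
    exact mul_le_mul_of_nonneg_right hkey (Real.log_nonneg (by exact_mod_cast hpp.one_lt.le))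
  have hexpand : ∑ p ∈ (n + 1).primesBelow, ((n : ℝ) / p - 1) * Real.log p
      = (n : ℝ) * (∑ p ∈ (n + 1).primesBelow, Real.log p / p)
        - ∑ p ∈ (n + 1).primesBelow, Real.log p := by
    rw [Finset.mul_sum, ← Finset.sum_sub_distrib]
    refine Finset.sum_congr rfl fun p hp => ?_
    have hpp := Nat.prime_of_mem_primesBelow hp
    have hp0 : (0 : ℝ) < p := by exact_mod_cast hpp.pos
    field_simp
  have htheta := theta_le n
  have hn0 : (0 : ℝ) < n := by exact_mod_cast hn
  have hsum1 : ∑ p ∈ (n + 1).primesBelow, ((n : ℝ) / p - 1) * Real.log p ≤ (n : ℝ) * Real.log n :=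
    le_trans (Finset.sum_le_sum hfloor) (hA.trans hfactle)
  have hmul : (n : ℝ) * (∑ p ∈ (n + 1).primesBelow, Real.log p / p)
      ≤ (n : ℝ) * (Real.log n + 1.4) := by nlinarith
  exact le_of_mul_le_mul_left hmul hn0

lemma mertens1' {n : ℕ} (hn : 1 ≤ n) :
    ∑ p ∈ Finset.range (n + 1), GG p ≤ Real.log n + 1.4 := by
  have h : ∑ p ∈ Finset.range (n + 1), GG p = ∑ p ∈ (n + 1).primesBelow, Real.log p / p := by
    rw [show (n + 1).primesBelow = Finset.filter (fun p => p.Prime) (Finset.range (n + 1)) from rfl]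
    rw [Finset.sum_filter]
    exact Finset.sum_congr rfl fun p _ => rfl
  rw [h]
  exact mertens1 hn

lemma block {a b : ℕ} (ha : 2 ≤ a) (hb : 1 ≤ b) :
    ∑ p ∈ Finset.Ioc a b, FF p ≤ (Real.log b + 1.4) / Real.log (a + 1) := by
  have hla : (0 : ℝ) < Real.log (a + 1) := by
    refine Real.log_pos ?_
    have : (2:ℝ) ≤ (a:ℝ) := by exact_mod_cast ha
    linarith
  have hstep : ∑ p ∈ Finset.Ioc a b, FF p ≤ (∑ p ∈ Finset.Ioc a b, GG p) / Real.log (a + 1) := by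
    rw [Finset.sum_div]
    refine Finset.sum_le_sum fun p hp => ?_
    obtain ⟨hap, hpb⟩ := Finset.mem_Ioc.mp hp
    unfold FF GG
    split
    · rename_i hpp
      have hp0 : (0:ℝ) < p := by exact_mod_cast hpp.pos
      have hlap : Real.log (a + 1) ≤ Real.log p := by
        refine Real.log_le_log (by positivity) ?_
        exact_mod_cast hap
      rw [div_div]
      rw [div_le_div_iff₀ (by positivity) (by positivity)]
      calc 1 * ((p:ℝ) * Real.log (a+1)) = (p:ℝ) * Real.log (a+1) := by ring
        _ ≤ (p:ℝ) * Real.log p := by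
            exact mul_le_mul_of_nonneg_left hlap hp0.le
        _ = Real.log p * p := by ring
    · simp
  refine hstep.trans ?_
  gcongr
  calc ∑ p ∈ Finset.Ioc a b, GG p ≤ ∑ p ∈ Finset.range (b + 1), GG p := by
        refine Finset.sum_le_sum_of_subset_of_nonneg ?_ (fun p _ _ => GG_nonneg p)
        intro p hp
        obtain ⟨_, h2⟩ := Finset.mem_Ioc.mp hp
        exact Finset.mem_range.mpr (by omega)
    _ ≤ Real.log b + 1.4 := mertens1' hb

noncomputable def AA (j : ℕ) : ℕ := ⌊Real.exp (2 ^ j)⌋₊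

lemma AA_mono : Monotone AA := by
  intro i j hij
  refine Nat.floor_mono (Real.exp_le_exp.mpr ?_)
  exact_mod_cast pow_le_pow_right₀ one_le_two hij

lemma AA_zero : AA 0 = 2 := by
  unfold AA
  rw [pow_zero]
  have h1 := Real.exp_one_gt_d9
  have h2 := Real.exp_one_lt_d9
  rw [Nat.floor_eq_iff (by positivity)]
  refine ⟨by norm_num; linarith, by norm_num; linarith⟩

lemma AA_ge2 (j : ℕ) : 2 ≤ AA j := AA_zero ▸ AA_mono (Nat.zero_le j)

lemma log_AA_le (j : ℕ) : Real.log (AA j) ≤ 2 ^ j := by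
  have h1 : (AA j : ℝ) ≤ Real.exp (2 ^ j) := Nat.floor_le (le_of_lt (Real.exp_pos _))
  have h0 : (0:ℝ) < (AA j : ℝ) := by exact_mod_cast (AA_ge2 j).trans_lt' (by norm_num)
  calc Real.log (AA j) ≤ Real.log (Real.exp (2 ^ j)) := Real.log_le_log h0 h1
    _ = 2 ^ j := Real.log_exp _

lemma le_log_AA_succ (j : ℕ) : (2 : ℝ) ^ j ≤ Real.log ((AA j : ℝ) + 1) := by
  have h1 : Real.exp (2 ^ j) < (AA j : ℝ) + 1 := Nat.lt_floor_add_one _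
  calc (2:ℝ) ^ j = Real.log (Real.exp (2 ^ j)) := (Real.log_exp _).symm
    _ ≤ Real.log ((AA j : ℝ) + 1) := Real.log_le_log (Real.exp_pos _) h1.le

lemma blockbound (j : ℕ) : ∑ p ∈ Finset.Ioc (AA j) (AA (j + 1)), FF p ≤ 3.4 := by
  have h1 := block (AA_ge2 j) ((AA_ge2 (j+1)).trans' (by norm_num))
  refine h1.trans ?_
  have h2 : (0:ℝ) < 2 ^ j := by positivity
  have h3 : Real.log (AA (j+1)) + 1.4 ≤ 2 ^ (j+1) + 1.4 := by
    linarith [log_AA_le (j+1)]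
  have h4 : (2:ℝ)^j ≤ Real.log ((AA j : ℝ) + 1) := le_log_AA_succ j
  have h12 : (1:ℝ) ≤ 2 ^ j := by
    simpa using pow_le_pow_right₀ one_le_two (Nat.zero_le j)
  have h5 : (0:ℝ) < Real.log ((AA j : ℝ) + 1) := lt_of_lt_of_le h2 h4
  have hgoal : (Real.log (AA (j+1)) + 1.4) / Real.log ((AA j : ℝ) + 1)
      ≤ ((2:ℝ) ^ (j+1) + 1.4) / 2 ^ j := div_le_div₀ (by positivity) h3 h2 h4
  have heq : ((2:ℝ) ^ (j+1) + 1.4) / 2 ^ j = 2 + 1.4 / 2 ^ j := by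
    rw [pow_succ]
    field_simp
  have hfin : (1.4:ℝ) / 2 ^ j ≤ 1.4 := by
    calc (1.4:ℝ) / 2 ^ j ≤ 1.4 / 1 := by
          refine div_le_div_of_nonneg_left (by norm_num) (by norm_num) h12
    _ = 1.4 := by norm_num
  calc (Real.log (AA (j+1)) + 1.4) / Real.log ((AA j : ℝ) + 1)
      ≤ ((2:ℝ) ^ (j+1) + 1.4) / 2 ^ j := hgoal
    _ = 2 + 1.4 / 2 ^ j := heq
    _ ≤ 2 + 1.4 := by linarith
    _ ≤ 3.4 := by norm_num

lemma telescope (J : ℕ) :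
    ∑ p ∈ Finset.Ioc (AA 0) (AA J), FF p
      = ∑ j ∈ Finset.range J, ∑ p ∈ Finset.Ioc (AA j) (AA (j + 1)), FF p := by
  induction J with
  | zero => simp
  | succ J ih =>
    rw [Finset.sum_range_succ, ← ih,
      Finset.sum_Ioc_consecutive _ (AA_mono (Nat.zero_le J)) (AA_mono (Nat.le_succ J))]

lemma mertens {Y : ℕ} (hY : 16 ≤ Y) :
    ∑ p ∈ (Y + 1).primesBelow, 1 / (p : ℝ) ≤ 16 * Real.log (Real.log Y) := by
  have hY3 : (16 : ℝ) ≤ (Y : ℝ) := by exact_mod_cast hY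
  have hlogY : Real.exp 1 ≤ Real.log Y := by
    have h16 : Real.log 16 ≤ Real.log Y := Real.log_le_log (by norm_num) hY3
    have h162 : Real.log 16 = 4 * Real.log 2 := by
      rw [show (16:ℝ) = 2 ^ 4 by norm_num, Real.log_pow]; push_cast; ring
    have hl2 := Real.log_two_gt_d9
    have he := Real.exp_one_lt_d9
    nlinarith
  have hlogY1 : (1:ℝ) < Real.log Y := lt_of_lt_of_le (by
    have := Real.exp_one_gt_d9; linarith) hlogY
  set M' := Real.log (Real.log Y) with hM'
  have hM1 : 1 ≤ M' := by
    rw [hM', show (1:ℝ) = Real.log (Real.exp 1) from (Real.log_exp 1).symm]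
    exact Real.log_le_log (Real.exp_pos 1) hlogY
  set J : ℕ := ⌊1.45 * M'⌋₊ + 2 with hJ
  have hJge : 1.45 * M' + 1 ≤ (J : ℝ) := by
    rw [hJ]
    push_cast
    have := Nat.lt_floor_add_one (1.45 * M')
    linarith
  have hJle : (J : ℝ) ≤ 1.45 * M' + 3 := by
    rw [hJ]
    push_cast
    have := Nat.floor_le (by positivity : (0:ℝ) ≤ 1.45 * M')
    linarith
  have h2J : Real.log Y ≤ (2:ℝ) ^ J := by
    have hl2 := Real.log_two_gt_d9
    have h1 : M' ≤ (J:ℝ) * Real.log 2 := by nlinarith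
    calc Real.log Y = Real.exp M' := (Real.exp_log (by linarith)).symm
      _ ≤ Real.exp ((J:ℝ) * Real.log 2) := Real.exp_le_exp.mpr h1
      _ = (2:ℝ) ^ (J : ℕ) := by
          rw [← Real.log_pow, Real.exp_log (by positivity)]
  have hAJ : Y ≤ AA J := by
    refine Nat.le_floor ?_
    calc (Y:ℝ) = Real.exp (Real.log Y) := (Real.exp_log (by linarith)).symm
      _ ≤ Real.exp ((2:ℝ) ^ J) := Real.exp_le_exp.mpr h2J
      _ = Real.exp ((2:ℕ) ^ J) := by norm_num
  have hsplit : ∑ p ∈ (Y + 1).primesBelow, 1 / (p : ℝ)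
      = ∑ p ∈ Finset.range (Y + 1), FF p := by
    rw [show (Y + 1).primesBelow = Finset.filter (fun p => p.Prime) (Finset.range (Y + 1)) from rfl]
    rw [Finset.sum_filter]
    exact Finset.sum_congr rfl fun p _ => rfl
  have hIcoIoc : Finset.Ico 3 (Y + 1) = Finset.Ioc 2 Y := by
    rw [Finset.Ico_add_one_right_eq_Icc]
    exact Finset.Icc_add_one_left_eq_Ioc 2 Y
  have hdecomp : ∑ p ∈ Finset.range (Y + 1), FF p
      = ∑ p ∈ Finset.range 3, FF p + ∑ p ∈ Finset.Ioc 2 Y, FF p := by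
    rw [Finset.range_eq_Ico, ← Finset.sum_Ico_consecutive FF (by omega : (0:ℕ) ≤ 3)
      (by omega : 3 ≤ Y + 1), hIcoIoc, ← Finset.range_eq_Ico]
  rw [hsplit, hdecomp]
  have hr3 : ∑ p ∈ Finset.range 3, FF p = 1 / 2 := by
    rw [Finset.sum_range_succ, Finset.sum_range_succ, Finset.sum_range_one]
    unfold FF
    norm_num
  have hIoc : ∑ p ∈ Finset.Ioc 2 Y, FF p ≤ 3.4 * J := by
    calc ∑ p ∈ Finset.Ioc 2 Y, FF p ≤ ∑ p ∈ Finset.Ioc (AA 0) (AA J), FF p := by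
          refine Finset.sum_le_sum_of_subset_of_nonneg ?_ (fun p _ _ => FF_nonneg p)
          rw [AA_zero]
          exact Finset.Ioc_subset_Ioc le_rfl hAJ
      _ = ∑ j ∈ Finset.range J, ∑ p ∈ Finset.Ioc (AA j) (AA (j + 1)), FF p := telescope J
      _ ≤ ∑ _j ∈ Finset.range J, (3.4:ℝ) := Finset.sum_le_sum fun j _ => blockbound j
      _ = 3.4 * J := by rw [Finset.sum_const, Finset.card_range]; push_cast; ring
  rw [hr3]
  nlinarith


lemma sum_rpow_le {Y : ℕ} {dl : ℝ} (hdl : 0 ≤ dl) (hY : 16 ≤ Y) :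
    ∑ p ∈ (Y + 1).primesBelow, (p : ℝ) ^ (-(1 - dl))
      ≤ (Y : ℝ) ^ dl * (16 * Real.log (Real.log Y)) := by
  have hstep : ∀ p ∈ (Y + 1).primesBelow, (p : ℝ) ^ (-(1 - dl)) ≤ (Y : ℝ) ^ dl * (1 / p) := by
    intro p hp
    have hpp := Nat.prime_of_mem_primesBelow hp
    have hp0 : (0 : ℝ) < p := by exact_mod_cast hpp.pos
    have hpY : (p : ℝ) ≤ Y := by exact_mod_cast Nat.lt_succ_iff.mp (Nat.lt_of_mem_primesBelow hp)
    have h1 : (p : ℝ) ^ (-(1 - dl)) = (p : ℝ) ^ dl * (1 / p) := by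
      rw [show -(1 - dl) = dl + (-1) by ring, Real.rpow_add hp0, Real.rpow_neg_one, one_div]
    rw [h1]
    exact mul_le_mul_of_nonneg_right (Real.rpow_le_rpow hp0.le hpY hdl) (by positivity)
  calc ∑ p ∈ (Y + 1).primesBelow, (p : ℝ) ^ (-(1 - dl))
      ≤ ∑ p ∈ (Y + 1).primesBelow, (Y : ℝ) ^ dl * (1 / p) := Finset.sum_le_sum hstep
    _ = (Y : ℝ) ^ dl * ∑ p ∈ (Y + 1).primesBelow, 1 / (p : ℝ) := by rw [Finset.mul_sum]
    _ ≤ (Y : ℝ) ^ dl * (16 * Real.log (Real.log Y)) :=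
        mul_le_mul_of_nonneg_left (mertens hY) (Real.rpow_nonneg (Nat.cast_nonneg Y) dl)


lemma numeric_bound {M wv : ℝ} (hM : (2400 : ℝ) ≤ M) (hw : Real.exp (M / 2) ≤ wv) :
    3.5 * (Real.exp (M / 4) * (16 * M)) ≤ wv / 8 := by
  have h12 : M / 12 ≤ Real.exp (M / 12) := by
    have := Real.add_one_le_exp (M / 12)
    linarith
  have hcube : (M / 12) ^ 3 ≤ Real.exp (M / 4) := by
    have h3 : (M / 12) ^ 3 ≤ Real.exp (M / 12) ^ 3 :=
      pow_le_pow_left₀ (by positivity) h12 3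
    have h4 : Real.exp (M / 12) ^ 3 = Real.exp (M / 4) := by
      rw [← Real.exp_nat_mul]
      congr 1
      push_cast
      ring
    rw [h4] at h3
    exact h3
  have h448 : 448 * M ≤ (M / 12) ^ 3 := by
    have hMsq : (2400 : ℝ) * 2400 ≤ M * M :=
      mul_le_mul hM hM (by norm_num) (by linarith)
    have h3 : (2400 : ℝ) * 2400 * M ≤ (M * M) * M :=
      mul_le_mul_of_nonneg_right hMsq (by linarith)
    nlinarith [h3, hM]
  have hnum : 448 * M ≤ Real.exp (M / 4) := h448.trans hcube
  have hhalf : 448 * M * Real.exp (M / 4) ≤ Real.exp (M / 2) := by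
    rw [show M / 2 = M / 4 + M / 4 by ring, Real.exp_add]
    exact mul_le_mul_of_nonneg_right hnum (Real.exp_pos _).le
  have h2 : 3.5 * (Real.exp (M / 4) * (16 * M)) = (448 * M * Real.exp (M / 4)) / 8 := by
    ring
  rw [h2]
  linarith

set_option maxHeartbeats 2000000 in
theorem count_Pm_ne_Pbig (m : ℕ) (hm : 2 ≤ m) :
    ∃ c C : ℝ, 0 < c ∧ 0 < C ∧ ∀ x : ℝ, 3 ≤ x →
      (((Finset.Icc 1 ⌊x⌋₊).filter (fun n => Pm m n ≠ Pbig n)).card : ℝ)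
        ≤ C * x * Real.exp (-c * Real.sqrt (Real.log x * Real.log (Real.log x))) := by
  refine ⟨8⁻¹, Real.exp (Real.exp 2400) + 3, by norm_num, by positivity, fun x hx => ?_⟩
  have hx0 : (0 : ℝ) < x := by linarith
  set L := Real.log x with hL
  set M := Real.log L with hM
  have hL1 : 1 < L := by
    rw [hL]
    calc (1 : ℝ) = Real.log (Real.exp 1) := (Real.log_exp 1).symm
      _ < Real.log x := by
          refine Real.log_lt_log (Real.exp_pos 1) ?_
          have := Real.exp_one_lt_d9
          linarith
  have hL0 : (0 : ℝ) < L := by linarith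
  have hM0 : 0 < M := Real.log_pos hL1
  have hML : M ≤ L := le_trans (Real.log_le_self hL0.le) le_rfl
  set w := Real.sqrt (L * M) with hw
  have hw0 : 0 < w := Real.sqrt_pos.mpr (by positivity)
  have hwL : w ≤ L := by
    rw [hw]
    calc Real.sqrt (L * M) ≤ Real.sqrt (L * L) := Real.sqrt_le_sqrt (by nlinarith)
      _ = L := Real.sqrt_mul_self hL0.le
  have hcount_triv : (((Finset.Icc 1 ⌊x⌋₊).filter (fun n => Pm m n ≠ Pbig n)).card : ℝ)
      ≤ (⌊x⌋₊ : ℝ) := by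
    have h1 : ((Finset.Icc 1 ⌊x⌋₊).filter (fun n => Pm m n ≠ Pbig n)).card
        ≤ (Finset.Icc 1 ⌊x⌋₊).card := Finset.card_filter_le _ _
    have h2 : (Finset.Icc 1 ⌊x⌋₊).card = ⌊x⌋₊ := by rw [Nat.card_Icc]; omega
    exact_mod_cast h1.trans_eq h2
  have hfloorx : (⌊x⌋₊ : ℝ) ≤ x := Nat.floor_le hx0.le
  by_cases hbig : x < Real.exp (Real.exp 2400)
  · -- small x : trivial bound
    have hLsmall : L ≤ Real.exp 2400 := by
      rw [hL, show Real.exp 2400 = Real.log (Real.exp (Real.exp 2400)) from (Real.log_exp _).symm]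
      exact Real.log_le_log hx0 hbig.le
    have hw8 : 8⁻¹ * w ≤ Real.exp 2400 := by
      have h1 : 8⁻¹ * w ≤ w := by linarith
      linarith
    have hexp : (1 : ℝ) ≤ (Real.exp (Real.exp 2400) + 3) * Real.exp (-8⁻¹ * w) := by
      rw [show (-8⁻¹ : ℝ) * w = -(8⁻¹ * w) by ring, Real.exp_neg]
      calc (1 : ℝ) = Real.exp (8⁻¹ * w) * (Real.exp (8⁻¹ * w))⁻¹ :=
            (mul_inv_cancel₀ (ne_of_gt (Real.exp_pos _))).symm
        _ ≤ (Real.exp (Real.exp 2400) + 3) * (Real.exp (8⁻¹ * w))⁻¹ := by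
            refine mul_le_mul_of_nonneg_right ?_ (by positivity)
            have := Real.exp_le_exp.mpr hw8
            linarith
    calc (((Finset.Icc 1 ⌊x⌋₊).filter (fun n => Pm m n ≠ Pbig n)).card : ℝ)
        ≤ x := hcount_triv.trans hfloorx
      _ = 1 * x := (one_mul x).symm
      _ ≤ ((Real.exp (Real.exp 2400) + 3) * Real.exp (-8⁻¹ * w)) * x :=
          mul_le_mul_of_nonneg_right hexp hx0.le
      _ = (Real.exp (Real.exp 2400) + 3) * x * Real.exp (-8⁻¹ * w) := by ring
  · push_neg at hbig
    have hE : Real.exp 2400 ≤ L := by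
      rw [hL, show Real.exp 2400 = Real.log (Real.exp (Real.exp 2400)) from (Real.log_exp _).symm]
      exact Real.log_le_log (Real.exp_pos _) hbig
    have hM2400 : (2400 : ℝ) ≤ M := by
      rw [hM, show (2400 : ℝ) = Real.log (Real.exp 2400) from (Real.log_exp _).symm]
      exact Real.log_le_log (Real.exp_pos _) hE
    have hMw : M ≤ w := by
      rw [hw]
      calc M = Real.sqrt (M * M) := (Real.sqrt_mul_self hM0.le).symm
        _ ≤ Real.sqrt (L * M) := Real.sqrt_le_sqrt (by nlinarith)
    set dl := M / (4 * w) with hdl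
    have hdl0 : 0 < dl := by positivity
    have hdl4 : dl ≤ 1 / 4 := by
      rw [hdl, div_le_iff₀ (by positivity)]
      linarith
    have hwsq : w * w = L * M := Real.mul_self_sqrt (by positivity)
    have hdlL : dl * L = w / 4 := by
      have h1 : dl * L = (M * L) / (4 * w) := by rw [hdl]; ring
      have h2 : M * L = w * w := by rw [hwsq]; ring
      rw [h1, h2]
      field_simp
    have hdlw : dl * w = M / 4 := by
      rw [hdl]
      field_simp
    have hLM : Real.exp M = L := Real.exp_log hL0
    have hsqrtL : Real.sqrt L = Real.exp (M / 2) := by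
      rw [show L = Real.exp (M / 2) * Real.exp (M / 2) by
        rw [← Real.exp_add, show M / 2 + M / 2 = M by ring]; exact hLM.symm]
      exact Real.sqrt_mul_self (Real.exp_pos _).le
    have hwexp : Real.exp (M / 2) ≤ w := by
      rw [← hsqrtL, hw]
      exact Real.sqrt_le_sqrt (by nlinarith)
    set N := ⌊x⌋₊ with hN
    set Y := ⌊Real.exp w⌋₊ with hY
    have hY16 : 16 ≤ Y := by
      refine Nat.le_floor ?_
      have h1 : (16 : ℝ) ≤ Real.exp w := by
        linarith [Real.add_one_le_exp w, hMw, hM2400]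
      exact_mod_cast h1
    have hY1' : 1 ≤ Y := by omega
    have hYy : (Y : ℝ) ≤ Real.exp w := Nat.floor_le (by positivity)
    have hyY2 : Real.exp w ≤ 2 * Y := by
      have h1 := Nat.lt_floor_add_one (Real.exp w)
      have h2 : (16 : ℝ) ≤ (Y : ℝ) := by exact_mod_cast hY16
      rw [← hY] at h1
      linarith
    have hyx : Real.exp w ≤ x := by
      calc Real.exp w ≤ Real.exp L := Real.exp_le_exp.mpr hwL
        _ = x := Real.exp_log hx0
    have hYN : Y ≤ N := by
      rw [hY, hN]
      exact Nat.floor_mono hyx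
    have hN3 : 3 ≤ N := by
      rw [hN]
      exact Nat.le_floor (by exact_mod_cast hx)
    set T := (Finset.Icc 1 N).filter (fun n => Pm m n ≠ Pbig n) with hT
    set T1 := (Finset.Icc 1 N).filter (fun n => ∃ p ∈ Finset.Ioc Y N, p.Prime ∧ p ^ 2 ∣ n) with hT1
    set T2 := (Finset.Icc 1 N).filter (fun n => ∀ p ∈ n.primeFactors, p ≤ Y) with hT2
    have hsplit : T ⊆ T1 ∪ T2 := by
      intro n hn
      rw [hT, Finset.mem_filter, Finset.mem_Icc] at hn
      obtain ⟨⟨hn1, hnN⟩, hne⟩ := hn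
      by_cases h1 : n = 1
      · subst h1; exact absurd (Pm_one_eq m) hne
      have hn2 : 2 ≤ n := by omega
      obtain ⟨p, hpp, hpdvd, hmax⟩ := exists_sq_dvd hm hn2 hne
      by_cases hsm : ∀ q ∈ n.primeFactors, q ≤ Y
      · exact Finset.mem_union_right _
          (Finset.mem_filter.mpr ⟨Finset.mem_Icc.mpr ⟨hn1, hnN⟩, hsm⟩)
      · push_neg at hsm
        obtain ⟨q, hq, hqY⟩ := hsm
        refine Finset.mem_union_left _
          (Finset.mem_filter.mpr ⟨Finset.mem_Icc.mpr ⟨hn1, hnN⟩, p, ?_, hpp, hpdvd⟩)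
        refine Finset.mem_Ioc.mpr ⟨lt_of_lt_of_le hqY (hmax q hq), ?_⟩
        have hpn : p ∣ n := dvd_trans (dvd_pow_self p two_ne_zero) hpdvd
        exact le_trans (Nat.le_of_dvd (by omega) hpn) hnN
    have hcards : (T.card : ℝ) ≤ (T1.card : ℝ) + (T2.card : ℝ) := by
      have h1 : T.card ≤ (T1 ∪ T2).card := Finset.card_le_card hsplit
      have h2 : (T1 ∪ T2).card ≤ T1.card + T2.card := Finset.card_union_le T1 T2
      exact_mod_cast h1.trans h2
    have hT1bound : (T1.card : ℝ) ≤ 2 * x * Real.exp (-w) := by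
      have hY0 : (0 : ℝ) < Y := by exact_mod_cast hY1'
      have h1 : (1 : ℝ) / Y ≤ 2 / Real.exp w := by
        rw [div_le_div_iff₀ hY0 (Real.exp_pos w)]
        linarith
      calc (T1.card : ℝ) ≤ (N : ℝ) / Y := card_T1 hY1' hYN
        _ = (N : ℝ) * (1 / Y) := by ring
        _ ≤ x * (2 / Real.exp w) :=
            mul_le_mul hfloorx h1 (by positivity) hx0.le
        _ = 2 * x * Real.exp (-w) := by rw [Real.exp_neg]; ring
    have hT2bound : (T2.card : ℝ) ≤ x * Real.exp (-(w / 8)) := by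
      have hsg0 : (0 : ℝ) < 1 - dl := by linarith
      have hsgh : (1 : ℝ) / 2 ≤ 1 - dl := by linarith
      have hrk := rankin N Y hsg0
      have hpe := prod_le_exp Y hsgh
      have hsr := sum_rpow_le hdl0.le hY16
      have hYpos : (0 : ℝ) < (Y : ℝ) := by exact_mod_cast hY1'
      have hlogY : Real.log Y ≤ w := by
        calc Real.log Y ≤ Real.log (Real.exp w) := Real.log_le_log hYpos hYy
          _ = w := Real.log_exp w
      have hlogY1 : (1 : ℝ) ≤ Real.log Y := by
        have h16 : Real.log 16 ≤ Real.log Y := by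
          refine Real.log_le_log (by norm_num) ?_
          exact_mod_cast hY16
        have h162 : Real.log 16 = 4 * Real.log 2 := by
          rw [show (16 : ℝ) = 2 ^ 4 by norm_num, Real.log_pow]; push_cast; ring
        have hl2 := Real.log_two_gt_d9
        linarith
      have hloglogY : Real.log (Real.log Y) ≤ M := by
        calc Real.log (Real.log Y) ≤ Real.log w := Real.log_le_log (by linarith) hlogY
          _ ≤ Real.log L := Real.log_le_log hw0 hwL
          _ = M := hM.symm
      have hYdl : (Y : ℝ) ^ dl ≤ Real.exp (M / 4) := by
        calc (Y : ℝ) ^ dl ≤ (Real.exp w) ^ dl :=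
              Real.rpow_le_rpow (Nat.cast_nonneg Y) hYy hdl0.le
          _ = Real.exp (w * dl) := by
              rw [Real.rpow_def_of_pos (Real.exp_pos w), Real.log_exp]
          _ = Real.exp (M / 4) := by rw [mul_comm, hdlw]
      have hsum_le : 3.5 * ∑ p ∈ (Y + 1).primesBelow, (p : ℝ) ^ (-(1 - dl)) ≤ w / 8 := by
        have h1 : ∑ p ∈ (Y + 1).primesBelow, (p : ℝ) ^ (-(1 - dl))
            ≤ Real.exp (M / 4) * (16 * M) := by
          refine hsr.trans ?_
          refine mul_le_mul hYdl (by linarith)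
            (mul_nonneg (by norm_num) (Real.log_nonneg hlogY1)) (Real.exp_pos _).le
        have h2 := numeric_bound hM2400 hwexp
        linarith
      calc (T2.card : ℝ)
          ≤ (N : ℝ) ^ (1 - dl) * ∏ p ∈ (Y + 1).primesBelow, (1 - (p : ℝ) ^ (-(1 - dl)))⁻¹ := hrk
        _ ≤ (N : ℝ) ^ (1 - dl)
            * Real.exp (3.5 * ∑ p ∈ (Y + 1).primesBelow, (p : ℝ) ^ (-(1 - dl))) :=
            mul_le_mul_of_nonneg_left hpe (Real.rpow_nonneg (Nat.cast_nonneg N) _)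
        _ ≤ x ^ (1 - dl) * Real.exp (w / 8) := by
            refine mul_le_mul ?_ (Real.exp_le_exp.mpr hsum_le) (Real.exp_pos _).le
              (Real.rpow_nonneg hx0.le _)
            exact Real.rpow_le_rpow (Nat.cast_nonneg N) hfloorx hsg0.le
        _ = x * Real.exp (-(w / 4)) * Real.exp (w / 8) := by
            rw [Real.rpow_def_of_pos hx0]
            have h1 : Real.log x * (1 - dl) = L - dl * L := by rw [← hL]; ring
            rw [h1, hdlL, Real.exp_sub, Real.exp_log hx0, Real.exp_neg, div_eq_mul_inv]
        _ = x * Real.exp (-(w / 8)) := by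
            rw [mul_assoc, ← Real.exp_add, show -(w / 4) + w / 8 = -(w / 8) by ring]
    calc (T.card : ℝ) ≤ (T1.card : ℝ) + (T2.card : ℝ) := hcards
      _ ≤ 2 * x * Real.exp (-(w / 8)) + x * Real.exp (-(w / 8)) := by
          refine add_le_add (hT1bound.trans ?_) hT2bound
          refine mul_le_mul_of_nonneg_left (Real.exp_le_exp.mpr (by linarith)) (by linarith)
      _ = 3 * x * Real.exp (-(w / 8)) := by ring
      _ ≤ (Real.exp (Real.exp 2400) + 3) * x * Real.exp (-8⁻¹ * w) := by
          rw [show (-8⁻¹ : ℝ) * w = -(w / 8) by ring]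
          refine mul_le_mul_of_nonneg_right ?_ (Real.exp_pos _).le
          refine mul_le_mul_of_nonneg_right ?_ hx0.le
          linarith [Real.exp_pos (Real.exp (2400 : ℝ))]
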